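/- Let H and K be disjoint signed graphs, and let Γ = (H, v; K, u) be their coalescence obtained by identifying a vertex v of H with a vertex u of K. Then η(Γ) ≤ η(K) + η(H − v) + 1. -/

import Mathlib

open scoped Classical

/-- The nullity of a real matrix: the dimension of the kernel of the
associated linear map. -/
noncomputable def Matrix.nullity {n : Type*} [Fintype n] (A : Matrix n n ℝ) : ℕ :=
  Module.finrank ℝ (LinearMap.ker A.mulVecLin)

/-- Let `H` and `K` be disjoint signed graphs and let
`Γ = (H, v; K, u)` be their coalescence, obtained by identifying a vertex `v`
of `H` with a vertex `u` of `K`.  Then `η(Γ) ≤ η(K) + η(H − v) + 1`. -/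
theorem nullity_coalescence {W U : Type*} [Fintype W] [DecidableEq W]
    [Fintype U] [DecidableEq U]
    (GH : SimpleGraph W) (σH : W → W → ℝ)
    (hsymH : ∀ x y, σH x y = σH y x)
    (hσH : ∀ x y, GH.Adj x y → σH x y = 1 ∨ σH x y = -1)
    (AH : Matrix W W ℝ)
    (hAH : ∀ x y, AH x y = if GH.Adj x y then σH x y else 0)
    (GK : SimpleGraph U) (σK : U → U → ℝ)
    (hsymK : ∀ x y, σK x y = σK y x)
    (hσK : ∀ x y, GK.Adj x y → σK x y = 1 ∨ σK x y = -1)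
    (AK : Matrix U U ℝ)
    (hAK : ∀ x y, AK x y = if GK.Adj x y then σK x y else 0)
    (v : W) (u : U)
    (A : Matrix ({x : W // x ≠ v} ⊕ U) ({x : W // x ≠ v} ⊕ U) ℝ)
    (hsymA : A.IsSymm)
    (hA1 : ∀ x y : {x : W // x ≠ v},
      A (Sum.inl x) (Sum.inl y) = AH (x : W) (y : W))
    (hA2 : ∀ a b : U, A (Sum.inr a) (Sum.inr b) = AK a b)
    (hA3 : ∀ (x : {x : W // x ≠ v}) (a : U),
      A (Sum.inl x) (Sum.inr a) = if a = u then AH (x : W) v else 0) :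
    A.nullity ≤
      AK.nullity +
        (AH.submatrix (fun x : {x : W // x ≠ v} => (x : W))
          (fun x : {x : W // x ≠ v} => (x : W))).nullity + 1 := by
  classical
  simp only [Matrix.nullity]
  set B := AH.submatrix (fun x : {x : W // x ≠ v} => (x : W))
      (fun x : {x : W // x ≠ v} => (x : W)) with hBdef
  have hrow1 : ∀ (z : ({x : W // x ≠ v} ⊕ U) → ℝ) (x : {x : W // x ≠ v}),
      A.mulVec z (Sum.inl x)
        = B.mulVec (fun y => z (Sum.inl y)) x + AH (x : W) v * z (Sum.inr u) := by
    intro z x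
    simp only [Matrix.mulVec, dotProduct, Fintype.sum_sum_type, hA1, hA3, hBdef,
      Matrix.submatrix_apply, ite_mul, zero_mul]
    rw [Finset.sum_ite_eq' Finset.univ u (fun a => AH (x : W) v * z (Sum.inr a))]
    simp
  have hrow2 : ∀ (z : ({x : W // x ≠ v} ⊕ U) → ℝ) (a : U),
      A.mulVec z (Sum.inr a)
        = (if a = u then ∑ x : {x : W // x ≠ v}, AH (x : W) v * z (Sum.inl x) else 0)
          + AK.mulVec (fun b => z (Sum.inr b)) a := by
    intro z a
    have hsym : ∀ (x : {x : W // x ≠ v}), A (Sum.inr a) (Sum.inl x)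
        = if a = u then AH (x : W) v else 0 := by
      intro x; rw [hsymA.apply, hA3]
    simp only [Matrix.mulVec, dotProduct, Fintype.sum_sum_type, hsym, hA2, ite_mul,
      zero_mul, Finset.sum_ite_irrel, Finset.sum_const_zero]
  classical
  -- ψ : ker A → (U → ℝ), restriction of projection
  let φ : (({x : W // x ≠ v} ⊕ U) → ℝ) →ₗ[ℝ] (U → ℝ) := LinearMap.funLeft ℝ ℝ Sum.inr
  let ψ : ↥(LinearMap.ker A.mulVecLin) →ₗ[ℝ] (U → ℝ) :=
    φ.domRestrict (LinearMap.ker A.mulVecLin)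
  have hrn : Module.finrank ℝ (LinearMap.range ψ) + Module.finrank ℝ (LinearMap.ker ψ)
      = Module.finrank ℝ (LinearMap.ker A.mulVecLin) :=
    LinearMap.finrank_range_add_finrank_ker ψ
  -- ker ψ injects into ker B
  have hker : Module.finrank ℝ (LinearMap.ker ψ) ≤ Module.finrank ℝ (LinearMap.ker B.mulVecLin) := by
    let g : ↥(LinearMap.ker ψ) →ₗ[ℝ] ({x : W // x ≠ v} → ℝ) :=
      (LinearMap.funLeft ℝ ℝ Sum.inl).comp
        ((LinearMap.ker A.mulVecLin).subtype.comp (LinearMap.ker ψ).subtype)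
    have hmem : ∀ z : ↥(LinearMap.ker ψ), g z ∈ LinearMap.ker B.mulVecLin := by
      rintro ⟨⟨z, hz⟩, hz2⟩
      have hz' : A.mulVec z = 0 := hz
      have hz2' : φ z = 0 := hz2
      have hinr : ∀ a, z (Sum.inr a) = 0 := fun a => congrFun hz2' a
      rw [LinearMap.mem_ker]
      ext x
      have := congrFun hz' (Sum.inl x)
      rw [hrow1 z x, hinr u, mul_zero, add_zero] at this
      simpa [g, φ, LinearMap.funLeft, Function.comp_def] using this
    have hinj : Function.Injective (g.codRestrict (LinearMap.ker B.mulVecLin) hmem) := by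
      rintro ⟨⟨z, hz⟩, hz2⟩ ⟨⟨z', hz'⟩, hz2'⟩ h
      have h' : g ⟨⟨z, hz⟩, hz2⟩ = g ⟨⟨z', hz'⟩, hz2'⟩ := congrArg Subtype.val h
      have hl : ∀ x, z (Sum.inl x) = z' (Sum.inl x) := fun x => congrFun h' x
      have hr : ∀ a, z (Sum.inr a) = z' (Sum.inr a) := by
        intro a
        have h1 : φ z = 0 := hz2
        have h2 : φ z' = 0 := hz2'
        rw [show z (Sum.inr a) = φ z a from rfl, show z' (Sum.inr a) = φ z' a from rfl, h1, h2]
      ext i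
      cases i with
      | inl x => exact hl x
      | inr a => exact hr a
    exact LinearMap.finrank_le_finrank_of_injective hinj
  -- range ψ ≤ preimage of span of e_u
  let V : Submodule ℝ (U → ℝ) := Submodule.span ℝ {(Pi.single u 1 : U → ℝ)}
  let S : Submodule ℝ (U → ℝ) := V.comap AK.mulVecLin
  have hVmem : ∀ w : U → ℝ, (∀ a, a ≠ u → w a = 0) → w ∈ V := by
    intro w hw
    have : w = w u • (Pi.single u 1 : U → ℝ) := by
      ext a
      by_cases ha : a = u
      · subst ha; simp
      · simp [hw a ha, Pi.single_eq_of_ne ha]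
    rw [this]
    exact Submodule.smul_mem _ _ (Submodule.mem_span_singleton_self _)
  have hrange : LinearMap.range ψ ≤ S := by
    rintro y ⟨⟨z, hz⟩, rfl⟩
    have hz' : A.mulVec z = 0 := hz
    simp only [S, Submodule.mem_comap]
    apply hVmem
    intro a ha
    have := congrFun hz' (Sum.inr a)
    rw [hrow2 z a, if_neg ha, zero_add] at this
    simpa [ψ, φ, LinearMap.funLeft, Matrix.mulVecLin_apply, Function.comp_def] using this
  have hrange' : Module.finrank ℝ (LinearMap.range ψ) ≤ Module.finrank ℝ S :=
    Submodule.finrank_mono hrange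
  -- finrank S ≤ finrank ker AK + 1
  have hS : Module.finrank ℝ S ≤ Module.finrank ℝ (LinearMap.ker AK.mulVecLin) + 1 := by
    have hres : ∀ x ∈ S, AK.mulVecLin x ∈ V := fun x hx => hx
    let L'' := AK.mulVecLin.restrict hres
    have hrn2 : Module.finrank ℝ (LinearMap.range L'') + Module.finrank ℝ (LinearMap.ker L'')
        = Module.finrank ℝ S := LinearMap.finrank_range_add_finrank_ker L''
    have hV1 : Module.finrank ℝ V ≤ 1 := by
      have : (Pi.single u 1 : U → ℝ) ≠ 0 := by
        intro h; have := congrFun h u; simp at this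
      rw [finrank_span_singleton this]
    have h1 : Module.finrank ℝ (LinearMap.range L'') ≤ 1 :=
      (Submodule.finrank_le (LinearMap.range L'')).trans hV1
    have h2 : Module.finrank ℝ (LinearMap.ker L'') ≤
        Module.finrank ℝ (LinearMap.ker AK.mulVecLin) := by
      have hmem2 : ∀ z : ↥(LinearMap.ker L''),
          (S.subtype.comp (LinearMap.ker L'').subtype) z ∈ LinearMap.ker AK.mulVecLin := by
        rintro ⟨⟨z, hzS⟩, hzk⟩
        rw [LinearMap.mem_ker]
        have : (L'' ⟨z, hzS⟩ : U → ℝ) = AK.mulVecLin z := rfl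
        have h0 : L'' ⟨z, hzS⟩ = 0 := hzk
        rw [h0] at this
        exact this.symm
      have hinj2 : Function.Injective
          ((S.subtype.comp (LinearMap.ker L'').subtype).codRestrict
            (LinearMap.ker AK.mulVecLin) hmem2) := by
        rintro ⟨⟨z, hzS⟩, hzk⟩ ⟨⟨z', hzS'⟩, hzk'⟩ h
        have : z = z' := congrArg Subtype.val h
        subst this
        rfl
      exact LinearMap.finrank_le_finrank_of_injective hinj2
    omega
  omega
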